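/- Let [B,i,j] be a framed representation on V¹ and [B',i',j'] a framed representation on V². If [B,i,j] is stable, then the map τ : E(V¹,V²) ⊕ L(W,V²) ⊕ L(V¹,W) → L(V¹,V²) is surjective. -/

import Mathlib

noncomputable section

/-- Cast of graded components of a family of `ℂ`-vector spaces along an equality of indices. -/
def lcast {I : Type} (V : I → Type) [∀ i, AddCommGroup (V i)] [∀ i, Module ℂ (V i)]
    {i j : I} (hij : i = j) : V i ≃ₗ[ℂ] V j := by
  subst hij; exact LinearEquiv.refl ℂ (V i)

open LinearMap

section helpers

variable {M N : Type} [AddCommGroup M] [Module ℂ M] [FiniteDimensional ℂ M]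
  [AddCommGroup N] [Module ℂ N]

lemma trace_nondeg (D : N →ₗ[ℂ] M) (hD : ∀ f : M →ₗ[ℂ] N, trace ℂ M (D ∘ₗ f) = 0) :
    D = 0 := by
  ext n
  show D n = 0
  rw [← Module.forall_dual_apply_eq_zero_iff ℂ]
  intro ψ
  have h := hD (dualTensorHom ℂ M N (ψ ⊗ₜ n))
  have hcomp : D ∘ₗ dualTensorHom ℂ M N (ψ ⊗ₜ n) = dualTensorHom ℂ M M (ψ ⊗ₜ (D n)) := by
    ext x; simp [dualTensorHom_apply]
  rw [hcomp, trace_eq_contract_apply] at h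
  simpa using h

lemma comp_sum' {P : Type} [AddCommGroup P] [Module ℂ P] {ι : Type} (s : Finset ι)
    (f : M →ₗ[ℂ] P) (g : ι → N →ₗ[ℂ] M) :
    f ∘ₗ (∑ i ∈ s, g i) = ∑ i ∈ s, f ∘ₗ g i := by
  ext x; simp [LinearMap.sum_apply]

end helpers

section lcast_lemmas

variable {I : Type} (V : I → Type) [∀ i, AddCommGroup (V i)] [∀ i, Module ℂ (V i)]

@[simp] lemma lcast_rfl {i : I} (p : i = i) : lcast V p = LinearEquiv.refl ℂ (V i) := rfl

end lcast_lemmas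

section pairing

variable {I : Type} [Fintype I] [DecidableEq I]
  (V1 V2 : I → Type)
  [∀ i, AddCommGroup (V1 i)] [∀ i, Module ℂ (V1 i)] [∀ i, FiniteDimensional ℂ (V1 i)]
  [∀ i, AddCommGroup (V2 i)] [∀ i, Module ℂ (V2 i)] [∀ i, FiniteDimensional ℂ (V2 i)]

/-- The trace pairing map. -/
def pairMap : (∀ k, V2 k →ₗ[ℂ] V1 k) →ₗ[ℂ] Module.Dual ℂ (∀ k, V1 k →ₗ[ℂ] V2 k) where
  toFun D :=
    { toFun := fun f => ∑ k, trace ℂ (V1 k) (D k ∘ₗ f k)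
      map_add' := by intro f g; simp [comp_add, Finset.sum_add_distrib]
      map_smul' := by intro c f; simp [comp_smul, Finset.mul_sum] }
  map_add' := by intro D E; ext f; simp [add_comp, Finset.sum_add_distrib]
  map_smul' := by intro c D; ext f; simp [smul_comp, Finset.mul_sum]

lemma pairMap_apply (D : ∀ k, V2 k →ₗ[ℂ] V1 k) (f : ∀ k, V1 k →ₗ[ℂ] V2 k) :
    pairMap V1 V2 D f = ∑ k, trace ℂ (V1 k) (D k ∘ₗ f k) := rfl

lemma pairMap_single (D : ∀ k, V2 k →ₗ[ℂ] V1 k) (k : I) (f : V1 k →ₗ[ℂ] V2 k) :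
    pairMap V1 V2 D (Pi.single k f) = trace ℂ (V1 k) (D k ∘ₗ f) := by
  rw [pairMap_apply, Finset.sum_eq_single k]
  · simp
  · intro b _ hb; rw [Pi.single_eq_of_ne hb]; simp
  · simp

lemma pairMap_inj : Function.Injective (pairMap V1 V2) := by
  rw [← LinearMap.ker_eq_bot (M := ∀ k, V2 k →ₗ[ℂ] V1 k), LinearMap.ker_eq_bot']
  intro D hD
  funext k
  refine trace_nondeg (D k) fun f => ?_
  have h := congrFun (congrArg DFunLike.coe hD) (Pi.single k f)
  rwa [pairMap_single] at h

lemma pairMap_surj : Function.Surjective (pairMap V1 V2) := by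
  have hfin : Module.finrank ℂ (∀ k, V2 k →ₗ[ℂ] V1 k)
      = Module.finrank ℂ (Module.Dual ℂ (∀ k, V1 k →ₗ[ℂ] V2 k)) := by
    rw [Subspace.dual_finrank_eq, Module.finrank_pi_fintype, Module.finrank_pi_fintype]
    exact Finset.sum_congr rfl fun k _ => by
      rw [Module.finrank_linearMap, Module.finrank_linearMap, mul_comm]
  exact (LinearMap.injective_iff_surjective_of_finrank_eq_finrank hfin).mp (pairMap_inj V1 V2)

/-- Key cast-juggling lemma: from the trace identity extracted from the pairing with the
`C`-part of `τ` at an edge, deduce the intertwining relation (with casts). -/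
lemma rel_of_traces (D : ∀ i, V2 i →ₗ[ℂ] V1 i) {a b a' b' : I} (ha : a' = b) (hb : b' = a)
    (Bb : V1 a' →ₗ[ℂ] V1 b') (B'b : V2 a' →ₗ[ℂ] V2 b')
    (htr : ∀ c : V1 a →ₗ[ℂ] V2 b,
      trace ℂ (V1 b) (D b ∘ₗ c ∘ₗ (lcast V1 hb).toLinearMap ∘ₗ Bb
          ∘ₗ ((lcast V1 ha).symm).toLinearMap)
      = trace ℂ (V1 b') (D b' ∘ₗ B'b ∘ₗ (lcast V2 ha.symm).toLinearMap ∘ₗ c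
          ∘ₗ ((lcast V1 hb.symm).symm).toLinearMap)) :
    (lcast V1 hb).toLinearMap ∘ₗ Bb ∘ₗ ((lcast V1 ha).symm).toLinearMap ∘ₗ D b
      = D a ∘ₗ (lcast V2 hb).toLinearMap ∘ₗ B'b ∘ₗ ((lcast V2 ha).symm).toLinearMap := by
  subst ha; subst hb
  simp only [lcast_rfl, LinearEquiv.refl_toLinearMap, LinearEquiv.refl_symm, id_comp,
    comp_id] at htr ⊢
  rw [← sub_eq_zero]
  refine trace_nondeg _ fun c => ?_
  rw [sub_comp, map_sub, sub_eq_zero]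
  have h1 := htr c
  rw [← comp_assoc, trace_comp_comm'] at h1
  simpa only [comp_assoc] using h1

lemma rel_clean (D : ∀ i, V2 i →ₗ[ℂ] V1 i) {a b a' b' : I} (ha : a' = b) (hb : b' = a)
    (Bh : V1 a →ₗ[ℂ] V1 b) (B'h : V2 a →ₗ[ℂ] V2 b)
    (hyp : (lcast V1 ha.symm).toLinearMap ∘ₗ Bh ∘ₗ ((lcast V1 hb.symm).symm).toLinearMap ∘ₗ D b'
      = D a' ∘ₗ (lcast V2 ha.symm).toLinearMap ∘ₗ B'h ∘ₗ ((lcast V2 hb.symm).symm).toLinearMap) :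
    Bh ∘ₗ D a = D b ∘ₗ B'h := by
  subst ha; subst hb
  simpa only [lcast_rfl, LinearEquiv.refl_toLinearMap, LinearEquiv.refl_symm, id_comp,
    comp_id] using hyp

lemma rel_of_traces2 (D : ∀ i, V2 i →ₗ[ℂ] V1 i) {a b a' b' a'' b'' : I}
    (P1 : b' = a) (P2 : a' = b) (Q1 : b'' = a') (Q2 : b = b'') (Q3 : a'' = a) (Q4 : a'' = b')
    (Bv : V1 a' →ₗ[ℂ] V1 b') (B'v : V2 a' →ₗ[ℂ] V2 b')
    (htr : ∀ c : V1 a →ₗ[ℂ] V2 b,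
      trace ℂ (V1 b) (D b ∘ₗ c ∘ₗ (lcast V1 P1).toLinearMap ∘ₗ Bv
          ∘ₗ ((lcast V1 P2).symm).toLinearMap)
      = trace ℂ (V1 b') (D b' ∘ₗ B'v ∘ₗ (lcast V2 Q1).toLinearMap ∘ₗ (lcast V2 Q2).toLinearMap
          ∘ₗ c ∘ₗ (lcast V1 Q3).toLinearMap ∘ₗ ((lcast V1 Q4).symm).toLinearMap)) :
    (lcast V1 P1).toLinearMap ∘ₗ Bv ∘ₗ ((lcast V1 P2).symm).toLinearMap ∘ₗ D b
      = D a ∘ₗ (lcast V2 P1).toLinearMap ∘ₗ B'v ∘ₗ ((lcast V2 P2).symm).toLinearMap := by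
  subst P1 P2 Q2 Q3
  simp only [lcast_rfl, LinearEquiv.refl_toLinearMap, LinearEquiv.refl_symm, id_comp,
    comp_id] at htr ⊢
  rw [← sub_eq_zero]
  refine trace_nondeg _ fun c => ?_
  rw [sub_comp, map_sub, sub_eq_zero]
  have h1 := htr c
  rw [← comp_assoc, trace_comp_comm'] at h1
  simpa only [comp_assoc] using h1

lemma rel_clean2 (D : ∀ i, V2 i →ₗ[ℂ] V1 i) {a b a' b' a'' b'' : I}
    (R1 : b'' = a') (R2 : b = b'') (R3 : a'' = a) (R4 : a'' = b') (q1 : a' = b) (q2 : b' = a)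
    (Bh : V1 a →ₗ[ℂ] V1 b) (B'h : V2 a →ₗ[ℂ] V2 b)
    (hyp : (lcast V1 R1).toLinearMap ∘ₗ (lcast V1 R2).toLinearMap ∘ₗ Bh
        ∘ₗ (lcast V1 R3).toLinearMap ∘ₗ ((lcast V1 R4).symm).toLinearMap ∘ₗ D b'
      = D a' ∘ₗ (lcast V2 R1).toLinearMap ∘ₗ (lcast V2 R2).toLinearMap ∘ₗ B'h
        ∘ₗ (lcast V2 R3).toLinearMap ∘ₗ ((lcast V2 R4).symm).toLinearMap) :
    Bh ∘ₗ D a = D b ∘ₗ B'h := by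
  subst R3 R4 R2 q1
  simpa only [lcast_rfl, LinearEquiv.refl_toLinearMap, LinearEquiv.refl_symm, id_comp,
    comp_id] using hyp

end pairing

lemma fam_congr {I H : Type} (s t : H → I) (V1 V2 : I → Type)
    [∀ i, AddCommGroup (V1 i)] [∀ i, Module ℂ (V1 i)]
    [∀ i, AddCommGroup (V2 i)] [∀ i, Module ℂ (V2 i)]
    (x : ∀ h, V1 (s h) →ₗ[ℂ] V2 (t h)) {h1 h2 : H} (e : h1 = h2) :
    x h1 = (lcast V2 (congrArg t e.symm)).toLinearMap ∘ₗ x h2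
      ∘ₗ (lcast V1 (congrArg s e)).toLinearMap := by
  subst e; rfl

section dite_helpers

variable {p : Prop} [Decidable p]

lemma dite_add_zero {α : Type*} [AddZeroClass α] (f g : p → α) :
    (if h : p then f h + g h else 0)
      = (if h : p then f h else 0) + (if h : p then g h else 0) := by
  split <;> simp

lemma dite_smul_zero {α : Type*} [AddCommMonoid α] [Module ℂ α] (c : ℂ) (f : p → α) :
    (if h : p then c • f h else 0) = c • (if h : p then f h else 0) := by
  split <;> simp

lemma dite_apply_lm {M N : Type} [AddCommMonoid M] [AddCommMonoid N] [Module ℂ M] [Module ℂ N]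
    (f : p → (M →ₗ[ℂ] N)) (v : M) :
    (if h : p then f h else 0) v = if h : p then f h v else 0 := by
  split <;> simp

lemma comp_dite_zero {M N P : Type} [AddCommMonoid M] [AddCommMonoid N] [AddCommMonoid P]
    [Module ℂ M] [Module ℂ N] [Module ℂ P] (f : N →ₗ[ℂ] P) (g : p → (M →ₗ[ℂ] N)) :
    f ∘ₗ (if h : p then g h else 0) = if h : p then f ∘ₗ g h else 0 := by
  split <;> simp

lemma trace_dite_zero {M : Type} [AddCommGroup M] [Module ℂ M]
    (g : p → (M →ₗ[ℂ] M)) :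
    LinearMap.trace ℂ M (if h : p then g h else 0)
      = if h : p then LinearMap.trace ℂ M (g h) else 0 := by
  split <;> simp

end dite_helpers

/-- If `[B,i,j]` is stable, then `τ` is surjective. -/
theorem stmt2
    {I H : Type} [Fintype I] [Fintype H] [DecidableEq I]
    (s t : H → I) (bar : H → H)
    (bar_invol : ∀ h, bar (bar h) = h) (bar_ne : ∀ h, bar h ≠ h)
    (s_bar : ∀ h, s (bar h) = t h) (t_bar : ∀ h, t (bar h) = s h)
    (eps : H → ℤ) (eps_pm : ∀ h, eps h = 1 ∨ eps h = -1)
    (eps_bar : ∀ h, eps (bar h) = - eps h)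
    (V1 V2 W : I → Type)
    [∀ i, AddCommGroup (V1 i)] [∀ i, Module ℂ (V1 i)] [∀ i, FiniteDimensional ℂ (V1 i)]
    [∀ i, AddCommGroup (V2 i)] [∀ i, Module ℂ (V2 i)] [∀ i, FiniteDimensional ℂ (V2 i)]
    [∀ i, AddCommGroup (W i)] [∀ i, Module ℂ (W i)] [∀ i, FiniteDimensional ℂ (W i)]
    (B : ∀ h, V1 (s h) →ₗ[ℂ] V1 (t h)) (iV : ∀ i, W i →ₗ[ℂ] V1 i) (jV : ∀ i, V1 i →ₗ[ℂ] W i)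
    (B' : ∀ h, V2 (s h) →ₗ[ℂ] V2 (t h)) (iV' : ∀ i, W i →ₗ[ℂ] V2 i) (jV' : ∀ i, V2 i →ₗ[ℂ] W i)
    -- stability of [B, iV, jV]
    (hstab : ∀ S : ∀ i, Submodule ℂ (V1 i),
      (∀ h, (S (s h)).map (B h) ≤ S (t h)) →
      (∀ i, S i ≤ LinearMap.ker (jV i)) →
      ∀ i, S i = ⊥) :
    Function.Surjective (fun Cab :
        (∀ h, V1 (s h) →ₗ[ℂ] V2 (t h)) × (∀ i, W i →ₗ[ℂ] V2 i) × (∀ i, V1 i →ₗ[ℂ] W i) =>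
      (fun k => (∑ h : H, if hk : t h = k then
          (eps h : ℂ) • ((lcast V2 hk).toLinearMap ∘ₗ
            (B' h ∘ₗ (lcast V2 (t_bar h)).toLinearMap ∘ₗ Cab.1 (bar h)
              + Cab.1 h ∘ₗ (lcast V1 (t_bar h)).toLinearMap ∘ₗ B (bar h))
            ∘ₗ (lcast V1 ((s_bar h).trans hk)).symm.toLinearMap) else 0)
        + iV' k ∘ₗ Cab.2.2 k + Cab.2.1 k ∘ₗ jV k : ∀ k, V1 k →ₗ[ℂ] V2 k)) := by
  classical
  set τf := (fun Cab :
        (∀ h, V1 (s h) →ₗ[ℂ] V2 (t h)) × (∀ i, W i →ₗ[ℂ] V2 i) × (∀ i, V1 i →ₗ[ℂ] W i) =>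
      (fun k => (∑ h : H, if hk : t h = k then
          (eps h : ℂ) • ((lcast V2 hk).toLinearMap ∘ₗ
            (B' h ∘ₗ (lcast V2 (t_bar h)).toLinearMap ∘ₗ Cab.1 (bar h)
              + Cab.1 h ∘ₗ (lcast V1 (t_bar h)).toLinearMap ∘ₗ B (bar h))
            ∘ₗ (lcast V1 ((s_bar h).trans hk)).symm.toLinearMap) else 0)
        + iV' k ∘ₗ Cab.2.2 k + Cab.2.1 k ∘ₗ jV k : ∀ k, V1 k →ₗ[ℂ] V2 k)) with hτf
  let τL : ((∀ h, V1 (s h) →ₗ[ℂ] V2 (t h)) × (∀ i, W i →ₗ[ℂ] V2 i) × (∀ i, V1 i →ₗ[ℂ] W i))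
      →ₗ[ℂ] (∀ k, V1 k →ₗ[ℂ] V2 k) :=
    { toFun := τf
      map_add' := by
        intro x y
        show τf (x + y) = τf x + τf y
        rw [hτf]
        funext k
        ext v
        simp only [Prod.fst_add, Prod.snd_add, Pi.add_apply, LinearMap.add_apply,
          LinearMap.sum_apply, LinearMap.comp_apply, LinearMap.smul_apply, dite_apply_lm,
          map_add, smul_add, dite_add_zero, Finset.sum_add_distrib]
        abel
      map_smul' := by
        intro c x
        show τf (c • x) = c • τf x
        rw [hτf]
        funext k
        ext v
        simp only [Prod.smul_fst, Prod.smul_snd, Pi.smul_apply, LinearMap.smul_apply,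
          LinearMap.sum_apply, LinearMap.comp_apply, LinearMap.add_apply, RingHom.id_apply,
          dite_apply_lm, map_smul, smul_add, dite_smul_zero, Finset.smul_sum, smul_comm c]
        simp only [← smul_add, map_smul, dite_smul_zero]
      }
  suffices hS : Function.Surjective ⇑τL from hS
  rw [← LinearMap.range_eq_top]
  have hann : (LinearMap.range τL).dualAnnihilator = ⊥ := by
    rw [eq_bot_iff]
    intro φ hφ
    obtain ⟨D, rfl⟩ := pairMap_surj V1 V2 φ
    have hφ0 : ∀ x, pairMap V1 V2 D (τf x) = 0 := fun x =>
      (Submodule.mem_dualAnnihilator _).mp hφ _ ⟨x, rfl⟩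
    suffices hD0 : D = 0 by rw [hD0, map_zero]; exact Submodule.zero_mem ⊥
    -- Condition 1: jV k ∘ D k = 0
    have hj : ∀ k, jV k ∘ₗ D k = 0 := by
      intro k
      refine trace_nondeg _ fun a₀ => ?_
      have hx := hφ0 (0, Pi.single k a₀, 0)
      rw [hτf] at hx
      simp only [Pi.zero_apply, LinearMap.comp_zero, LinearMap.zero_comp, add_zero, zero_add,
        smul_zero, dite_eq_ite, ite_self, Finset.sum_const_zero, zero_add] at hx
      rw [pairMap_apply, Finset.sum_eq_single k] at hx
      · rw [Pi.single_eq_same] at hx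
        rw [LinearMap.comp_assoc, trace_comp_comm', LinearMap.comp_assoc]
        exact hx
      · intro b _ hb
        rw [Pi.single_eq_of_ne hb]
        simp
      · simp
    -- Condition 2: intertwining relation with casts
    have hrel0 : ∀ h₀ : H,
        (lcast V1 (t_bar h₀)).toLinearMap ∘ₗ B (bar h₀)
            ∘ₗ ((lcast V1 (s_bar h₀)).symm).toLinearMap ∘ₗ D (t h₀)
          = D (s h₀) ∘ₗ (lcast V2 (t_bar h₀)).toLinearMap ∘ₗ B' (bar h₀)
            ∘ₗ ((lcast V2 (s_bar h₀)).symm).toLinearMap := by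
      intro h₀
      refine rel_of_traces2 V1 V2 D (t_bar h₀) (s_bar h₀) (t_bar (bar h₀))
        ((congrArg t (bar_invol h₀)).symm) (congrArg s (bar_invol h₀)) (s_bar (bar h₀))
        (B (bar h₀)) (B' (bar h₀)) fun c => ?_
      have hx := hφ0 (Pi.single h₀ c, 0, 0)
      rw [hτf, pairMap_apply] at hx
      simp only [Pi.zero_apply, LinearMap.comp_zero, LinearMap.zero_comp, add_zero] at hx
      simp only [comp_sum', map_sum] at hx
      rw [Finset.sum_comm] at hx
      simp only [comp_dite_zero, trace_dite_zero, Fintype.sum_dite_eq] at hx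
      simp only [lcast_rfl, LinearEquiv.refl_toLinearMap, LinearMap.id_comp, comp_smul,
        map_smul, smul_eq_mul, comp_add, add_comp, map_add, LinearMap.comp_assoc] at hx
      rw [Finset.sum_eq_add_of_mem h₀ (bar h₀) (Finset.mem_univ _) (Finset.mem_univ _)
        (Ne.symm (bar_ne h₀)) ?_] at hx
      swap
      · intro h _ hh
        have h1 : Pi.single (M := fun h => V1 (s h) →ₗ[ℂ] V2 (t h)) h₀ c h = 0 :=
          Pi.single_eq_of_ne hh.1 _
        have h2 : Pi.single (M := fun h => V1 (s h) →ₗ[ℂ] V2 (t h)) h₀ c (bar h) = 0 := by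
          refine Pi.single_eq_of_ne (fun e => hh.2 ?_) _
          rw [← bar_invol h, e]
        rw [h1, h2]
        simp
      have e1 : Pi.single (M := fun h => V1 (s h) →ₗ[ℂ] V2 (t h)) h₀ c (bar h₀) = 0 :=
        Pi.single_eq_of_ne (bar_ne h₀) _
      rw [fam_congr s t V1 V2 (Pi.single h₀ c) (bar_invol h₀)] at hx
      simp only [e1, Pi.single_eq_same, LinearMap.comp_zero, LinearMap.zero_comp, map_zero,
        mul_zero, add_zero, zero_add, eps_bar, Int.cast_neg, neg_mul,
        LinearMap.comp_assoc] at hx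
      rw [add_neg_eq_zero] at hx
      have hne : (eps h₀ : ℂ) ≠ 0 := by rcases eps_pm h₀ with he | he <;> simp [he]
      exact mul_left_cancel₀ hne hx
    -- cast-free intertwining relation
    have hrel : ∀ h, B h ∘ₗ D (s h) = D (t h) ∘ₗ B' h := by
      intro h
      have hcl := hrel0 (bar h)
      rw [fam_congr s t V1 V1 B (bar_invol h), fam_congr s t V2 V2 B' (bar_invol h)] at hcl
      simp only [LinearMap.comp_assoc] at hcl
      exact rel_clean2 V1 V2 D (t_bar (bar h)) ((congrArg t (bar_invol h)).symm)
        (congrArg s (bar_invol h)) (s_bar (bar h)) (s_bar h) (t_bar h) (B h) (B' h) hcl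
    -- stability kills D
    have hmap : ∀ h, (LinearMap.range (D (s h))).map (B h) ≤ LinearMap.range (D (t h)) := by
      intro h x hx
      simp only [Submodule.mem_map, LinearMap.mem_range] at hx ⊢
      obtain ⟨y, ⟨v, rfl⟩, rfl⟩ := hx
      refine ⟨B' h v, ?_⟩
      have := LinearMap.ext_iff.mp (hrel h) v
      simpa using this.symm
    have hker : ∀ i, LinearMap.range (D i) ≤ LinearMap.ker (jV i) := by
      intro i x hx
      obtain ⟨v, rfl⟩ := hx
      have := LinearMap.ext_iff.mp (hj i) v
      simpa using this
    have hS := hstab (fun i => LinearMap.range (D i)) hmap hker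
    funext k
    exact LinearMap.range_eq_bot.mp (hS k)
  rw [← Submodule.dualAnnihilator_top] at hann
  exact Subspace.dualAnnihilator_inj.mp hann
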